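/- The number a_{n,k} of fillings of the double staircase 2δ_n with k dots, such that each row contains at most one dot and each column contains at most one dot, equals (n+1)!/(n-k+1)! · C(n,k). -/

import Mathlib

open Finset

attribute [local instance] Classical.propDecidable

def mok (n k : ℕ) (s : Finset (ℕ × ℕ)) : Prop :=
  s.card = k ∧ (∀ p ∈ s, p.1 < n ∧ p.2 < 2 * (p.1 + 1)) ∧
  (∀ p ∈ s, ∀ q ∈ s, p.1 = q.1 → p = q) ∧
  (∀ p ∈ s, ∀ q ∈ s, p.2 = q.2 → p = q)

noncomputable def M (n k : ℕ) : Finset (Finset (ℕ × ℕ)) :=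
  ((Finset.range n ×ˢ Finset.range (2 * n)).powerset).filter (mok n k)

lemma mem_M {n k : ℕ} {s : Finset (ℕ × ℕ)} : s ∈ M n k ↔ mok n k s := by
  constructor
  · exact fun h => (Finset.mem_filter.mp h).2
  · intro h
    refine Finset.mem_filter.mpr ⟨Finset.mem_powerset.mpr ?_, h⟩
    intro p hp
    have h2 := h.2.1 p hp
    exact Finset.mem_product.mpr ⟨Finset.mem_range.mpr h2.1,
      Finset.mem_range.mpr (by omega)⟩

lemma M_zero (n : ℕ) : M n 0 = {∅} := by
  ext s
  rw [mem_M, Finset.mem_singleton]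
  constructor
  · intro h; exact Finset.card_eq_zero.mp h.1
  · rintro rfl; exact ⟨rfl, by simp, by simp, by simp⟩

lemma M_empty {n k : ℕ} (h : n < k) : M n k = ∅ := by
  rw [Finset.eq_empty_iff_forall_notMem]
  intro s hs
  rw [mem_M] at hs
  have hinj : Set.InjOn Prod.fst (s : Set (ℕ × ℕ)) := fun p hp q hq hpq =>
    hs.2.2.1 p hp q hq hpq
  have h1 : (s.image Prod.fst).card = k := by
    rw [Finset.card_image_of_injOn hinj, hs.1]
  have h2 : s.image Prod.fst ⊆ Finset.range n := by
    intro x hx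
    obtain ⟨p, hp, rfl⟩ := Finset.mem_image.mp hx
    exact Finset.mem_range.mpr (hs.2.1 p hp).1
  have := Finset.card_le_card h2
  simp [h1] at this
  omega

lemma rec_f (n k : ℕ) (h : k ≤ n) :
    (n + 2).descFactorial (k + 1) * (n + 1).choose (k + 1) =
      (n + 1).descFactorial (k + 1) * n.choose (k + 1) +
        (2 * n + 2 - k) * ((n + 1).descFactorial k * n.choose k) := by
  obtain ⟨m, rfl⟩ : ∃ m, n = k + m := ⟨n - k, by omega⟩
  have key : (k + m).choose (k + 1) * (k + 1) = (k + m).choose k * m := by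
    have := Nat.choose_succ_right_eq (k + m) k
    simpa using this
  have h1 : (k + m + 2).descFactorial (k + 1)
      = (k + m + 2) * (k + m + 1).descFactorial k := by
    exact Nat.succ_descFactorial_succ (k + m + 1) k
  have h2 : (k + m + 1).descFactorial (k + 1)
      = (m + 1) * (k + m + 1).descFactorial k := by
    have := Nat.descFactorial_succ (k + m + 1) k
    rw [this]; congr 1; omega
  have h3 : 2 * (k + m) + 2 - k = k + 2 * m + 2 := by omega
  rw [h1, h2, h3, Nat.choose_succ_succ]
  set d := (k + m + 1).descFactorial k
  set C := (k + m).choose k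
  set C' := (k + m).choose (k + 1)
  nlinarith [key]

lemma card_M (n : ℕ) : ∀ k, (M n k).card = (n + 1).descFactorial k * n.choose k := by
  induction n with
  | zero =>
    intro k
    cases k with
    | zero => simp [M_zero]
    | succ k => simp [M_empty (by omega : 0 < k + 1)]
  | succ n ih =>
    intro k
    cases k with
    | zero => simp [M_zero]
    | succ k =>
      by_cases hkn : n < k
      · rw [M_empty (by omega : n + 1 < k + 1), Nat.choose_eq_zero_of_lt (by omega)]
        simp
      push_neg at hkn
      classical
      -- split according to whether row n is used
      have hsplit := Finset.card_filter_add_card_filter_not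
        (s := M (n + 1) (k + 1)) (p := fun s => ∀ p ∈ s, p.1 ≠ n)
      set B := (M (n + 1) (k + 1)).filter (fun s => ∀ p ∈ s, p.1 ≠ n) with hB
      set C := (M (n + 1) (k + 1)).filter (fun s => ¬ ∀ p ∈ s, p.1 ≠ n) with hC
      have hBeq : B = M n (k + 1) := by
        ext s
        rw [hB, Finset.mem_filter, mem_M, mem_M]
        constructor
        · rintro ⟨⟨hcard, hbnd, hrow, hcol⟩, hne⟩
          refine ⟨hcard, fun p hp => ?_, hrow, hcol⟩
          have := hbnd p hp
          have := hne p hp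
          exact ⟨by omega, (hbnd p hp).2⟩
        · rintro ⟨hcard, hbnd, hrow, hcol⟩
          refine ⟨⟨hcard, fun p hp => ⟨by have := (hbnd p hp).1; omega,
            (hbnd p hp).2⟩, hrow, hcol⟩, fun p hp => by have := (hbnd p hp).1; omega⟩
      have hCcard : C.card = (2 * n + 2 - k) * (M n k).card := by
        have hmap : ∀ s ∈ C, s.filter (fun p => p.1 ≠ n) ∈ M n k := by
          intro s hs
          rw [hC, Finset.mem_filter] at hs
          obtain ⟨hsM, hex⟩ := hs
          rw [mem_M] at hsM
          obtain ⟨hcard, hbnd, hrow, hcol⟩ := hsM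
          push_neg at hex
          obtain ⟨p0, hp0, hp0n⟩ := hex
          rw [mem_M]
          have hfe : s.filter (fun p => p.1 = n) = {p0} := by
            ext q
            simp only [Finset.mem_filter, Finset.mem_singleton]
            constructor
            · rintro ⟨hq, hqn⟩
              exact hrow q hq p0 hp0 (by rw [hqn, hp0n])
            · rintro rfl; exact ⟨hp0, hp0n⟩
          have hc : (s.filter (fun p => p.1 ≠ n)).card = k := by
            have := Finset.card_filter_add_card_filter_not
              (s := s) (p := fun p => p.1 = n)
            rw [hfe] at this
            simp only [Finset.card_singleton] at this
            have h2 : (s.filter (fun p => ¬ p.1 = n)) = s.filter (fun p => p.1 ≠ n) := rfl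
            rw [h2] at this
            omega
          refine ⟨hc, ?_, ?_, ?_⟩
          · intro p hp
            rw [Finset.mem_filter] at hp
            have := hbnd p hp.1
            have := hp.2
            exact ⟨by omega, (hbnd p hp.1).2⟩
          · intro p hp q hq
            rw [Finset.mem_filter] at hp hq
            exact hrow p hp.1 q hq.1
          · intro p hp q hq
            rw [Finset.mem_filter] at hp hq
            exact hcol p hp.1 q hq.1
        rw [Finset.card_eq_sum_card_fiberwise hmap]
        rw [Finset.sum_congr rfl (fun t ht => ?_), Finset.sum_const, smul_eq_mul,
          Nat.mul_comm]
        -- fiber over t has card 2n+2-k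
        rw [mem_M] at ht
        obtain ⟨htcard, htbnd, htrow, htcol⟩ := ht
        have himg : (t.image Prod.snd).card = k := by
          rw [Finset.card_image_of_injOn (fun p hp q hq hpq => htcol p hp q hq hpq), htcard]
        have hsub : t.image Prod.snd ⊆ Finset.range (2 * n + 2) := by
          intro x hx
          obtain ⟨p, hp, rfl⟩ := Finset.mem_image.mp hx
          have := htbnd p hp
          exact Finset.mem_range.mpr (by omega)
        have hD : ((Finset.range (2 * n + 2)) \ t.image Prod.snd).card = 2 * n + 2 - k := by
          rw [Finset.card_sdiff_of_subset hsub, himg, Finset.card_range]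
        rw [← hD]
        refine (Finset.card_bij (fun c _ => insert (n, c) t) ?_ ?_ ?_).symm
        · -- maps into fiber
          intro c hc
          rw [Finset.mem_sdiff, Finset.mem_range] at hc
          obtain ⟨hclt, hcnot⟩ := hc
          have hnotin : (n, c) ∉ t := fun h => absurd (htbnd _ h).1 (lt_irrefl n)
          rw [Finset.mem_filter, hC, Finset.mem_filter, mem_M]
          have hmemT : ∀ p ∈ t, p.1 < n := fun p hp => (htbnd p hp).1
          refine ⟨⟨⟨?_, ?_, ?_, ?_⟩, ?_⟩, ?_⟩
          · rw [Finset.card_insert_of_notMem hnotin, htcard]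
          · intro p hp
            rw [Finset.mem_insert] at hp
            rcases hp with rfl | hp
            · exact ⟨by omega, by simp; omega⟩
            · exact ⟨by have := hmemT p hp; omega, (htbnd p hp).2⟩
          · intro p hp q hq hpq
            rw [Finset.mem_insert] at hp hq
            rcases hp with rfl | hp <;> rcases hq with rfl | hq
            · rfl
            · exact absurd hpq.symm (by have := hmemT q hq; omega)
            · exact absurd hpq (by have := hmemT p hp; omega)
            · exact htrow p hp q hq hpq
          · intro p hp q hq hpq
            rw [Finset.mem_insert] at hp hq
            rcases hp with rfl | hp <;> rcases hq with rfl | hq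
            · rfl
            · have : (q.1, c) ∈ t := by
                have : q = (q.1, c) := by rw [Prod.ext_iff]; exact ⟨rfl, hpq.symm⟩
                rw [← this]; exact hq
              exact absurd (Finset.mem_image.mpr ⟨(q.1, c), this, rfl⟩) hcnot
            · have : (p.1, c) ∈ t := by
                have : p = (p.1, c) := by rw [Prod.ext_iff]; exact ⟨rfl, hpq⟩
                rw [← this]; exact hp
              exact absurd (Finset.mem_image.mpr ⟨(p.1, c), this, rfl⟩) hcnot
            · exact htcol p hp q hq hpq
          · push_neg
            exact ⟨(n, c), Finset.mem_insert_self _ _, rfl⟩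
          · -- filter gives back t
            ext q
            rw [Finset.mem_filter, Finset.mem_insert]
            constructor
            · rintro ⟨rfl | hq, hqn⟩
              · exact absurd rfl hqn
              · exact hq
            · intro hq
              exact ⟨Or.inr hq, by have := hmemT q hq; omega⟩
        · -- injective
          intro c1 hc1 c2 hc2 heq
          have heq' : insert (n, c1) t = insert (n, c2) t := heq
          have : (n, c1) ∈ insert (n, c2) t := heq' ▸ Finset.mem_insert_self (n, c1) t
          rw [Finset.mem_insert] at this
          rcases this with h | h
          · exact (Prod.mk.injEq _ _ _ _ ▸ h).2
          · exact absurd (htbnd _ h).1 (lt_irrefl n)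
        · -- surjective
          intro s hs
          rw [Finset.mem_filter, hC, Finset.mem_filter, mem_M] at hs
          obtain ⟨⟨⟨hcard, hbnd, hrow, hcol⟩, hex⟩, hfil⟩ := hs
          push_neg at hex
          obtain ⟨p0, hp0, hp0n⟩ := hex
          refine ⟨p0.2, ?_, ?_⟩
          · rw [Finset.mem_sdiff, Finset.mem_range]
            constructor
            · have := hbnd p0 hp0; omega
            · intro hmem
              obtain ⟨q, hq, hq2⟩ := Finset.mem_image.mp hmem
              rw [← hfil, Finset.mem_filter] at hq
              have := hcol q hq.1 p0 hp0 hq2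
              exact hq.2 (this ▸ hp0n)
          · -- insert (n, p0.2) t = s
            have hp0eq : p0 = (n, p0.2) := by
              rw [Prod.ext_iff]; exact ⟨hp0n, rfl⟩
            ext q
            rw [Finset.mem_insert, ← hfil, Finset.mem_filter]
            constructor
            · rintro (rfl | ⟨hq, _⟩)
              · exact hp0eq ▸ hp0
              · exact hq
            · intro hq
              by_cases hqn : q.1 = n
              · left
                have := hrow q hq p0 hp0 (by rw [hqn, hp0n])
                rw [this, ← hp0eq]
              · right; exact ⟨hq, hqn⟩
      have hBcard : B.card = (n + 1).descFactorial (k + 1) * n.choose (k + 1) := by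
        rw [hBeq, ih]
      rw [← hsplit]
      have : C.card = (2 * n + 2 - k) * ((n + 1).descFactorial k * n.choose k) := by
        rw [hCcard, ih]
      rw [hBcard, this]
      exact (rec_f n k hkn).symm

/-- The number of fillings of the double staircase `2δ_n` (rows numbered from
the top, row `i` having length `2(i+1)`) with `k` dots, no two dots in the
same row and no two in the same column, is `(n+1)!/(n-k+1)! · C(n,k)`.  A
filling is encoded as the finite set of (row, column) coordinates of the
dots. -/
theorem card_partial_rook_placements (n k : ℕ) (hk : k ≤ n) :
    {s : Finset (Fin n × ℕ) |
      s.card = k ∧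
      (∀ p ∈ s, p.2 < 2 * ((p.1 : ℕ) + 1)) ∧
      (∀ p ∈ s, ∀ q ∈ s, p.1 = q.1 → p = q) ∧
      (∀ p ∈ s, ∀ q ∈ s, p.2 = q.2 → p = q)}.ncard
      = Nat.factorial (n + 1) / Nat.factorial (n - k + 1) * n.choose k := by
  classical
  set S := {s : Finset (Fin n × ℕ) |
      s.card = k ∧
      (∀ p ∈ s, p.2 < 2 * ((p.1 : ℕ) + 1)) ∧
      (∀ p ∈ s, ∀ q ∈ s, p.1 = q.1 → p = q) ∧
      (∀ p ∈ s, ∀ q ∈ s, p.2 = q.2 → p = q)} with hS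
  have hinj : Function.Injective (fun p : Fin n × ℕ => ((p.1 : ℕ), p.2)) := by
    intro p q h
    rw [Prod.ext_iff] at h ⊢
    exact ⟨Fin.val_injective h.1, h.2⟩
  set F : Finset (Fin n × ℕ) → Finset (ℕ × ℕ) :=
    fun s => s.image (fun p => ((p.1 : ℕ), p.2)) with hFdef
  have hF : Function.Injective F := Finset.image_injective hinj
  have himg : F '' S = ↑(M n k) := by
    ext t
    simp only [Set.mem_image, Finset.mem_coe, mem_M, hS, Set.mem_setOf_eq]
    constructor
    · rintro ⟨s, ⟨hcard, hbnd, hrow, hcol⟩, rfl⟩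
      refine ⟨?_, ?_, ?_, ?_⟩
      · rw [hFdef]
        simp only
        rw [Finset.card_image_of_injective s hinj, hcard]
      · intro p hp
        obtain ⟨q, hq, rfl⟩ := Finset.mem_image.mp hp
        exact ⟨q.1.isLt, hbnd q hq⟩
      · intro p hp p' hp' hpp
        obtain ⟨q, hq, rfl⟩ := Finset.mem_image.mp hp
        obtain ⟨q', hq', rfl⟩ := Finset.mem_image.mp hp'
        have : q = q' := hrow q hq q' hq' (Fin.val_injective hpp)
        rw [this]
      · intro p hp p' hp' hpp
        obtain ⟨q, hq, rfl⟩ := Finset.mem_image.mp hp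
        obtain ⟨q', hq', rfl⟩ := Finset.mem_image.mp hp'
        have : q = q' := hcol q hq q' hq' hpp
        rw [this]
    · rintro ⟨hcard, hbnd, hrow, hcol⟩
      set g : {x // x ∈ t} → Fin n × ℕ :=
        fun q => ((⟨q.1.1, (hbnd q.1 q.2).1⟩ : Fin n), q.1.2) with hg
      have hginj : Function.Injective g := by
        intro q r h
        rw [hg, Prod.ext_iff] at h
        have h1 : q.1.1 = r.1.1 := congrArg Fin.val h.1
        have : q.1 = r.1 := by
          rw [Prod.ext_iff]; exact ⟨h1, h.2⟩
        exact Subtype.ext this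
      refine ⟨t.attach.image g, ⟨?_, ?_, ?_, ?_⟩, ?_⟩
      · rw [Finset.card_image_of_injective _ hginj, Finset.card_attach, hcard]
      · intro p hp
        obtain ⟨q, hq, rfl⟩ := Finset.mem_image.mp hp
        exact (hbnd q.1 q.2).2
      · intro p hp p' hp' hpp
        obtain ⟨q, _, rfl⟩ := Finset.mem_image.mp hp
        obtain ⟨q', _, rfl⟩ := Finset.mem_image.mp hp'
        have h1 : q.1.1 = q'.1.1 := congrArg Fin.val hpp
        have : q.1 = q'.1 := hrow q.1 q.2 q'.1 q'.2 h1
        rw [Subtype.ext this]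
      · intro p hp p' hp' hpp
        obtain ⟨q, _, rfl⟩ := Finset.mem_image.mp hp
        obtain ⟨q', _, rfl⟩ := Finset.mem_image.mp hp'
        have : q.1 = q'.1 := hcol q.1 q.2 q'.1 q'.2 hpp
        rw [Subtype.ext this]
      · rw [hFdef]
        simp only
        rw [Finset.image_image]
        have : ((fun p : Fin n × ℕ => ((p.1 : ℕ), p.2)) ∘ g) = Subtype.val := by
          funext q
          simp [hg]
        rw [this, Finset.attach_image_val]
  have h1 : S.ncard = (M n k).card := by
    rw [← Set.ncard_coe_finset, ← himg, Set.ncard_image_of_injective S hF]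
  rw [h1, card_M]
  have h2 : n + 1 - k = n - k + 1 := by omega
  rw [Nat.descFactorial_eq_div (by omega : k ≤ n + 1), h2]
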